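/- Two balanced disks in 𝔻² either do not intersect, intersect in exactly one point, or are equal. That is, if D₁ = {(φ₁(ζ), φ₂(ζ)) : ζ ∈ 𝔻} and D₂ = {(ψ₁(ζ), ψ₂(ζ)) : ζ ∈ 𝔻} are balanced disks with at least two distinct common points, then D₁ = D₂. -/

import Mathlib

/-- The open unit bidisk in `ℂ²`. -/
def bidisk : Set (ℂ × ℂ) := {p | ‖p.1‖ < 1 ∧ ‖p.2‖ < 1}

/-- The Möbius map `ζ ↦ λ (ζ - a) / (1 - conj a ⬝ ζ)`. -/
noncomputable def mobius (l a : ℂ) (z : ℂ) : ℂ :=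
  l * (z - a) / (1 - (starRingEnd ℂ) a * z)

/-- `φ` is an automorphism of the unit disk: on the disk it agrees with a Möbius map
`ζ ↦ λ (ζ - a)/(1 - conj a ⬝ ζ)` with `|λ| = 1` and `|a| < 1`. -/
def IsDiskAut (φ : ℂ → ℂ) : Prop :=
  ∃ l a : ℂ, ‖l‖ = 1 ∧ ‖a‖ < 1 ∧ ∀ z : ℂ, ‖z‖ < 1 → φ z = mobius l a z

/-- A balanced disk in the bidisk: the image of the unit disk under `ζ ↦ (φ₁ ζ, φ₂ ζ)` for
automorphisms `φ₁, φ₂` of the disk. -/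
def IsBalancedDisk (D : Set (ℂ × ℂ)) : Prop :=
  ∃ φ₁ φ₂ : ℂ → ℂ, IsDiskAut φ₁ ∧ IsDiskAut φ₂ ∧
    D = {p : ℂ × ℂ | ∃ ζ : ℂ, ‖ζ‖ < 1 ∧ p = (φ₁ ζ, φ₂ ζ)}

/-- An extreme disk for `f`: a balanced disk on which the restriction of `f` is an
automorphism of the disk. -/
def IsExtremeDisk (f : ℂ × ℂ → ℂ) (D : Set (ℂ × ℂ)) : Prop :=
  ∃ φ₁ φ₂ : ℂ → ℂ, IsDiskAut φ₁ ∧ IsDiskAut φ₂ ∧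
    D = {p : ℂ × ℂ | ∃ ζ : ℂ, ‖ζ‖ < 1 ∧ p = (φ₁ ζ, φ₂ ζ)} ∧
    IsDiskAut (fun ζ => f (φ₁ ζ, φ₂ ζ))

/-- The extreme set `X(f)` of `f : 𝔻² → 𝔻`: the points of the bidisk at which
`1 - |f(z,w)|² = (1 - |z|²)|f₁(z,w)| + (1 - |w|²)|f₂(z,w)|`. -/
def extremeSet (f : ℂ × ℂ → ℂ) : Set (ℂ × ℂ) :=
  {p ∈ bidisk | 1 - ‖f p‖ ^ 2 =
    (1 - ‖p.1‖ ^ 2) * ‖fderiv ℂ f p (1, 0)‖ + (1 - ‖p.2‖ ^ 2) * ‖fderiv ℂ f p (0, 1)‖}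

lemma denom_ne {a z : ℂ} (ha : ‖a‖ < 1) (hz : ‖z‖ < 1) :
    1 - (starRingEnd ℂ) a * z ≠ 0 := by
  intro h
  have h1 : (starRingEnd ℂ) a * z = 1 := by linear_combination -h
  have : ‖(starRingEnd ℂ) a * z‖ < 1 := by
    rw [norm_mul, RCLike.norm_conj]
    nlinarith [norm_nonneg a, norm_nonneg z]
  rw [h1] at this; simp at this

lemma normsq_key (a z : ℂ) :
    Complex.normSq (1 - (starRingEnd ℂ) a * z) - Complex.normSq (z - a)
      = (1 - Complex.normSq a) * (1 - Complex.normSq z) := by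
  simp only [Complex.normSq_apply, Complex.sub_re, Complex.sub_im, Complex.mul_re,
    Complex.mul_im, Complex.one_re, Complex.one_im, Complex.conj_re, Complex.conj_im]
  ring

lemma mobius_norm_lt {l a : ℂ} (hl : ‖l‖ = 1) (ha : ‖a‖ < 1) {z : ℂ} (hz : ‖z‖ < 1) :
    ‖mobius l a z‖ < 1 := by
  rw [mobius, norm_div, norm_mul, hl, one_mul, div_lt_one]
  · have h := normsq_key a z
    have h1 : Complex.normSq a < 1 := by
      rw [← Complex.sq_norm]; nlinarith [norm_nonneg a]
    have h2 : Complex.normSq z < 1 := by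
      rw [← Complex.sq_norm]; nlinarith [norm_nonneg z]
    have e1 : Complex.normSq (z - a) = ‖z - a‖ ^ 2 := by
      rw [← Complex.sq_norm]
    have e2 : Complex.normSq (1 - (starRingEnd ℂ) a * z) = ‖1 - (starRingEnd ℂ) a * z‖ ^ 2 := by
      rw [← Complex.sq_norm]
    nlinarith [norm_nonneg (z - a), norm_nonneg (1 - (starRingEnd ℂ) a * z)]
  · exact norm_pos_iff.mpr (denom_ne ha hz)

lemma mul_conj_one {l : ℂ} (hl : ‖l‖ = 1) : l * (starRingEnd ℂ) l = 1 := by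
  rw [Complex.mul_conj]
  norm_cast
  rw [← Complex.sq_norm, hl]; norm_num

lemma mobius_left_inv {l a : ℂ} (hl : ‖l‖ = 1) (ha : ‖a‖ < 1) {z : ℂ} (hz : ‖z‖ < 1) :
    mobius ((starRingEnd ℂ) l) (-(l * a)) (mobius l a z) = z := by
  have hll := mul_conj_one hl
  have hd1 : 1 - (starRingEnd ℂ) a * z ≠ 0 := denom_ne ha hz
  have hw : ‖mobius l a z‖ < 1 := mobius_norm_lt hl ha hz
  have hna : ‖-(l * a)‖ < 1 := by rw [norm_neg, norm_mul, hl, one_mul]; exact ha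
  have hd2 : 1 - (starRingEnd ℂ) (-(l * a)) * (mobius l a z) ≠ 0 := denom_ne hna hw
  simp only [mobius] at hd2 ⊢
  rw [div_eq_iff hd2]
  have hd1' : 1 - z * (starRingEnd ℂ) a ≠ 0 := by rwa [mul_comm]
  field_simp
  ring_nf
  simp only [map_neg, map_mul]
  linear_combination (z - z ^ 2 * (starRingEnd ℂ) a) * hll

lemma mobius_eq_iff {l m a b : ℂ} (ha : ‖a‖ < 1) (hb : ‖b‖ < 1) {z : ℂ} (hz : ‖z‖ < 1) :
    mobius l a z = mobius m b z ↔
      l * (z - a) * (1 - (starRingEnd ℂ) b * z) = m * (z - b) * (1 - (starRingEnd ℂ) a * z) := by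
  rw [mobius, mobius, div_eq_div_iff (denom_ne ha hz) (denom_ne hb hz)]

lemma mobius_two_point {l m a b : ℂ} (hl : ‖l‖ = 1) (hm : ‖m‖ = 1)
    (ha : ‖a‖ < 1) (hb : ‖b‖ < 1) {z₁ z₂ : ℂ} (h₁ : ‖z₁‖ < 1) (h₂ : ‖z₂‖ < 1)
    (hne : z₁ ≠ z₂) (e₁ : mobius l a z₁ = mobius m b z₁) (e₂ : mobius l a z₂ = mobius m b z₂) :
    ∀ z : ℂ, ‖z‖ < 1 → mobius l a z = mobius m b z := by
  set A := m * (starRingEnd ℂ) a - l * (starRingEnd ℂ) b with hAdef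
  set B := l * (1 + a * (starRingEnd ℂ) b) - m * (1 + b * (starRingEnd ℂ) a) with hBdef
  set C := m * b - l * a with hCdef
  have P1 : A * z₁ ^ 2 + B * z₁ + C = 0 := by
    have h := (mobius_eq_iff ha hb h₁).mp e₁
    rw [hAdef, hBdef, hCdef]; linear_combination h
  have P2 : A * z₂ ^ 2 + B * z₂ + C = 0 := by
    have h := (mobius_eq_iff ha hb h₂).mp e₂
    rw [hAdef, hBdef, hCdef]; linear_combination h
  have hz12 : z₁ - z₂ ≠ 0 := sub_ne_zero.mpr hne
  have hA : A = 0 := by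
    by_contra hA0
    have hBe : (z₁ - z₂) * (A * (z₁ + z₂) + B) = 0 := by linear_combination P1 - P2
    have hB : A * (z₁ + z₂) + B = 0 := (mul_eq_zero.mp hBe).resolve_left hz12
    have hC : C = A * z₁ * z₂ := by linear_combination P1 - z₁ * hB
    have hCA : C = -(l * m * (starRingEnd ℂ) A) := by
      rw [hAdef, hCdef]
      simp only [map_sub, map_mul, Complex.conj_conj]
      linear_combination (a * l) * (mul_conj_one hm) - (b * m) * (mul_conj_one hl)
    have n1 : ‖C‖ = ‖A‖ := by
      rw [hCA, norm_neg, norm_mul, norm_mul, hl, hm, RCLike.norm_conj, one_mul, one_mul]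
    have n2 : ‖C‖ = ‖A‖ * ‖z₁‖ * ‖z₂‖ := by rw [hC, norm_mul, norm_mul]
    have hApos : 0 < ‖A‖ := norm_pos_iff.mpr hA0
    have hlt : ‖z₁‖ * ‖z₂‖ < 1 := by nlinarith [norm_nonneg z₁, norm_nonneg z₂]
    nlinarith [mul_lt_mul_of_pos_left hlt hApos]
  have hB : B = 0 := by
    have hBe : (z₁ - z₂) * B = 0 := by linear_combination P1 - P2 - (z₁ ^ 2 - z₂ ^ 2) * hA
    exact (mul_eq_zero.mp hBe).resolve_left hz12
  have hC : C = 0 := by linear_combination P1 - z₁ ^ 2 * hA - z₁ * hB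
  intro z hz
  rw [mobius_eq_iff ha hb hz]
  rw [hAdef] at hA; rw [hBdef] at hB; rw [hCdef] at hC
  linear_combination z ^ 2 * hA + z * hB + hC

lemma mobius_comp {l a m b : ℂ} (hl : ‖l‖ = 1) (ha : ‖a‖ < 1) (hm : ‖m‖ = 1) (hb : ‖b‖ < 1) :
    ∃ n c : ℂ, ‖n‖ = 1 ∧ ‖c‖ < 1 ∧
      ∀ z : ℂ, ‖z‖ < 1 → mobius m b (mobius l a z) = mobius n c z := by
  have hll := mul_conj_one hl
  set u : ℂ := l + b * (starRingEnd ℂ) a with hudef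
  set v : ℂ := 1 + l * (starRingEnd ℂ) b * a with hvdef
  have hab : ‖b‖ * ‖a‖ < 1 := by nlinarith [norm_nonneg a, norm_nonneg b]
  have hu : u ≠ 0 := by
    intro h
    have : l = -(b * (starRingEnd ℂ) a) := by rw [hudef] at h; linear_combination h
    have : ‖l‖ = ‖b‖ * ‖a‖ := by rw [this, norm_neg, norm_mul, RCLike.norm_conj]
    rw [hl] at this; linarith
  have hv : v ≠ 0 := by
    intro h
    have : l * (starRingEnd ℂ) b * a = -1 := by rw [hvdef] at h; linear_combination h
    have h2 : ‖l * (starRingEnd ℂ) b * a‖ = ‖b‖ * ‖a‖ := by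
      rw [norm_mul, norm_mul, hl, RCLike.norm_conj, one_mul]
    rw [this] at h2; simp at h2
    linarith
  have hcu : (starRingEnd ℂ) u = (starRingEnd ℂ) l + (starRingEnd ℂ) b * a := by
    rw [hudef]; simp [map_add, map_mul, Complex.conj_conj]
  have hvu : v = l * (starRingEnd ℂ) u := by
    rw [hcu, hvdef]; linear_combination -hll
  have hnormuv : ‖v‖ = ‖u‖ := by rw [hvu, norm_mul, hl, one_mul, RCLike.norm_conj]
  -- norm of c
  have hnl : Complex.normSq l = 1 := by
    rw [← Complex.sq_norm, hl]; norm_num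
  have hmain : l * (starRingEnd ℂ) (b * (starRingEnd ℂ) a) = l * a * (starRingEnd ℂ) b := by
    simp only [map_mul, Complex.conj_conj]; ring
  have e1 : Complex.normSq u = 1 + Complex.normSq b * Complex.normSq a
      + 2 * (l * a * (starRingEnd ℂ) b).re := by
    rw [hudef, Complex.normSq_add, hnl, Complex.normSq_mul, Complex.normSq_conj, hmain]
  have e2 : Complex.normSq (l * a + b) = Complex.normSq a + Complex.normSq b
      + 2 * (l * a * (starRingEnd ℂ) b).re := by
    rw [Complex.normSq_add, Complex.normSq_mul, hnl, one_mul]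
  have hnsa : Complex.normSq a < 1 := by
    rw [← Complex.sq_norm]; nlinarith [norm_nonneg a]
  have hnsb : Complex.normSq b < 1 := by
    rw [← Complex.sq_norm]; nlinarith [norm_nonneg b]
  have hns : Complex.normSq (l * a + b) < Complex.normSq u := by nlinarith
  have hc : ‖(l * a + b) / u‖ < 1 := by
    rw [norm_div, div_lt_one (norm_pos_iff.mpr hu)]
    have k1 : Complex.normSq (l * a + b) = ‖l * a + b‖ ^ 2 := by
      rw [← Complex.sq_norm]
    have k2 : Complex.normSq u = ‖u‖ ^ 2 := by rw [← Complex.sq_norm]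
    nlinarith [norm_nonneg (l * a + b), norm_nonneg u]
  have hn : ‖m * u / v‖ = 1 := by
    rw [norm_div, norm_mul, hm, one_mul, hnormuv, div_self (norm_ne_zero_iff.mpr hu)]
  refine ⟨m * u / v, (l * a + b) / u, hn, hc, ?_⟩
  have hcu' : (starRingEnd ℂ) u ≠ 0 := by simpa using hu
  have hconjc : (starRingEnd ℂ) ((l * a + b) / u)
      = ((starRingEnd ℂ) a + l * (starRingEnd ℂ) b) / v := by
    rw [map_div₀, div_eq_div_iff hcu' hv]
    rw [hcu, hvdef]
    simp only [map_add, map_mul, Complex.conj_conj]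
    linear_combination (a * (starRingEnd ℂ) a * (starRingEnd ℂ) b - (starRingEnd ℂ) b) * hll
  intro z hz
  have hd1 : 1 - (starRingEnd ℂ) a * z ≠ 0 := denom_ne ha hz
  have hw : ‖mobius l a z‖ < 1 := mobius_norm_lt hl ha hz
  have hd2 : 1 - (starRingEnd ℂ) b * mobius l a z ≠ 0 := denom_ne hb hw
  have hd3 : 1 - (starRingEnd ℂ) ((l * a + b) / u) * z ≠ 0 := denom_ne hc hz
  have hDalt : v - ((starRingEnd ℂ) a + l * (starRingEnd ℂ) b) * z
      = (1 - (starRingEnd ℂ) a * z) * (1 - (starRingEnd ℂ) b * mobius l a z) := by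
    rw [mobius, hvdef]; field_simp; ring
  have hD : v - ((starRingEnd ℂ) a + l * (starRingEnd ℂ) b) * z ≠ 0 :=
    hDalt ▸ mul_ne_zero hd1 hd2
  have key1 : mobius m b (mobius l a z)
      = m * (u * z - (l * a + b)) / (v - ((starRingEnd ℂ) a + l * (starRingEnd ℂ) b) * z) := by
    rw [mobius, div_eq_div_iff hd2 hD]
    rw [mobius, hudef, hvdef]
    have hd1' : 1 - z * (starRingEnd ℂ) a ≠ 0 := by rwa [mul_comm]
    field_simp
    ring
  have key2 : mobius (m * u / v) ((l * a + b) / u) z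
      = m * (u * z - (l * a + b)) / (v - ((starRingEnd ℂ) a + l * (starRingEnd ℂ) b) * z) := by
    rw [mobius, div_eq_div_iff hd3 hD, hconjc]
    field_simp
  rw [key1, key2]

lemma mobius_right_inv {l a : ℂ} (hl : ‖l‖ = 1) (ha : ‖a‖ < 1) {z : ℂ} (hz : ‖z‖ < 1) :
    mobius l a (mobius ((starRingEnd ℂ) l) (-(l * a)) z) = z := by
  have hll := mul_conj_one hl
  have hl' : ‖(starRingEnd ℂ) l‖ = 1 := by rw [RCLike.norm_conj]; exact hl
  have ha' : ‖-(l * a)‖ < 1 := by rw [norm_neg, norm_mul, hl, one_mul]; exact ha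
  have h := mobius_left_inv hl' ha' hz
  rwa [Complex.conj_conj,
    show -((starRingEnd ℂ) l * -(l * a)) = a from by linear_combination a * hll] at h

lemma balanced_mem {l₁ a₁ l₂ a₂ : ℂ} (hl₁ : ‖l₁‖ = 1) (ha₁ : ‖a₁‖ < 1)
    (hl₂ : ‖l₂‖ = 1) (ha₂ : ‖a₂‖ < 1) (p : ℂ × ℂ) :
    (∃ ζ : ℂ, ‖ζ‖ < 1 ∧ p = (mobius l₁ a₁ ζ, mobius l₂ a₂ ζ)) ↔
      ‖p.1‖ < 1 ∧ p.2 = mobius l₂ a₂ (mobius ((starRingEnd ℂ) l₁) (-(l₁ * a₁)) p.1) := by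
  have hl₁' : ‖(starRingEnd ℂ) l₁‖ = 1 := by rw [RCLike.norm_conj]; exact hl₁
  have ha₁' : ‖-(l₁ * a₁)‖ < 1 := by rw [norm_neg, norm_mul, hl₁, one_mul]; exact ha₁
  constructor
  · rintro ⟨ζ, hζ, rfl⟩
    exact ⟨mobius_norm_lt hl₁ ha₁ hζ, by simp only; rw [mobius_left_inv hl₁ ha₁ hζ]⟩
  · rintro ⟨h1, h2⟩
    refine ⟨mobius ((starRingEnd ℂ) l₁) (-(l₁ * a₁)) p.1, mobius_norm_lt hl₁' ha₁' h1, ?_⟩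
    exact Prod.ext (by rw [mobius_right_inv hl₁ ha₁ h1]) h2

/-- Two balanced disks with at least two distinct common points coincide. -/
theorem balanced_disks_eq_of_two_common_points (D₁ D₂ : Set (ℂ × ℂ))
    (h1 : IsBalancedDisk D₁) (h2 : IsBalancedDisk D₂)
    (p q : ℂ × ℂ) (hp : p ∈ D₁ ∩ D₂) (hq : q ∈ D₁ ∩ D₂) (hpq : p ≠ q) :
    D₁ = D₂ := by
  obtain ⟨φ₁, φ₂, ⟨l₁, a₁, hl₁, ha₁, hφ₁⟩, ⟨l₂, a₂, hl₂, ha₂, hφ₂⟩, hD₁⟩ := h1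
  obtain ⟨ψ₁, ψ₂, ⟨m₁, b₁, hm₁, hb₁, hψ₁⟩, ⟨m₂, b₂, hm₂, hb₂, hψ₂⟩, hD₂⟩ := h2
  have hD₁' : D₁ = {p : ℂ × ℂ | ∃ ζ : ℂ, ‖ζ‖ < 1 ∧ p = (mobius l₁ a₁ ζ, mobius l₂ a₂ ζ)} := by
    rw [hD₁]; ext r
    constructor <;> rintro ⟨ζ, hζ, rfl⟩
    · exact ⟨ζ, hζ, by rw [hφ₁ ζ hζ, hφ₂ ζ hζ]⟩
    · exact ⟨ζ, hζ, by rw [hφ₁ ζ hζ, hφ₂ ζ hζ]⟩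
  have hD₂' : D₂ = {p : ℂ × ℂ | ∃ ζ : ℂ, ‖ζ‖ < 1 ∧ p = (mobius m₁ b₁ ζ, mobius m₂ b₂ ζ)} := by
    rw [hD₂]; ext r
    constructor <;> rintro ⟨ζ, hζ, rfl⟩
    · exact ⟨ζ, hζ, by rw [hψ₁ ζ hζ, hψ₂ ζ hζ]⟩
    · exact ⟨ζ, hζ, by rw [hψ₁ ζ hζ, hψ₂ ζ hζ]⟩
  have hl₁' : ‖(starRingEnd ℂ) l₁‖ = 1 := by rw [RCLike.norm_conj]; exact hl₁
  have ha₁' : ‖-(l₁ * a₁)‖ < 1 := by rw [norm_neg, norm_mul, hl₁, one_mul]; exact ha₁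
  have hm₁' : ‖(starRingEnd ℂ) m₁‖ = 1 := by rw [RCLike.norm_conj]; exact hm₁
  have hb₁' : ‖-(m₁ * b₁)‖ < 1 := by rw [norm_neg, norm_mul, hm₁, one_mul]; exact hb₁
  obtain ⟨n₁, c₁, hn₁, hc₁, hcomp₁⟩ := mobius_comp hl₁' ha₁' hl₂ ha₂
  obtain ⟨n₂, c₂, hn₂, hc₂, hcomp₂⟩ := mobius_comp hm₁' hb₁' hm₂ hb₂
  have memD₁ : ∀ r : ℂ × ℂ, r ∈ D₁ ↔ (‖r.1‖ < 1 ∧ r.2 = mobius n₁ c₁ r.1) := by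
    intro r
    rw [hD₁', Set.mem_setOf_eq, balanced_mem hl₁ ha₁ hl₂ ha₂]
    constructor
    · rintro ⟨h1, h2⟩; exact ⟨h1, by rw [h2, hcomp₁ r.1 h1]⟩
    · rintro ⟨h1, h2⟩; exact ⟨h1, by rw [h2, ← hcomp₁ r.1 h1]⟩
  have memD₂ : ∀ r : ℂ × ℂ, r ∈ D₂ ↔ (‖r.1‖ < 1 ∧ r.2 = mobius n₂ c₂ r.1) := by
    intro r
    rw [hD₂', Set.mem_setOf_eq, balanced_mem hm₁ hb₁ hm₂ hb₂]
    constructor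
    · rintro ⟨h1, h2⟩; exact ⟨h1, by rw [h2, hcomp₂ r.1 h1]⟩
    · rintro ⟨h1, h2⟩; exact ⟨h1, by rw [h2, ← hcomp₂ r.1 h1]⟩
  obtain ⟨hp1, hp2⟩ := (memD₁ p).mp hp.1
  obtain ⟨_, hp4⟩ := (memD₂ p).mp hp.2
  obtain ⟨hq1, hq2⟩ := (memD₁ q).mp hq.1
  obtain ⟨_, hq4⟩ := (memD₂ q).mp hq.2
  have hne : p.1 ≠ q.1 := by
    intro h
    exact hpq (Prod.ext h (by rw [hp2, hq2, h]))
  have htw := mobius_two_point hn₁ hn₂ hc₁ hc₂ hp1 hq1 hne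
    (hp2.symm.trans hp4) (hq2.symm.trans hq4)
  ext r
  rw [memD₁ r, memD₂ r]
  constructor
  · rintro ⟨h1, h2⟩; exact ⟨h1, h2.trans (htw r.1 h1)⟩
  · rintro ⟨h1, h2⟩; exact ⟨h1, h2.trans (htw r.1 h1).symm⟩
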